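/- Let f be the Davenport–Heilbronn function and suppose f(σ₀ + it₀) = 0 for real σ₀, t₀ with t₀ ≠ 0. Then also f(σ₀ − it₀) = 0, f(1 − σ₀ + it₀) = 0, and f(1 − σ₀ − it₀) = 0. In other words, the non-real zeros of the Davenport–Heilbronn function occur in quadruples symmetric with respect to the real axis and the critical line Re s = 1/2. -/

import Mathlib

open Complex DirichletCharacter

/-- The complex-conjugate character of a Dirichlet character `χ` (with values in `ℂ`). -/
noncomputable def conjChar {q : ℕ} (χ : DirichletCharacter ℂ q) : DirichletCharacter ℂ q :=
  χ.ringHomComp (starRingEnd ℂ)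

section aux
open Asymptotics Filter Topology Real

lemma hasDerivAt_conj_conj {F : ℂ → ℂ} {f' z : ℂ}
    (h : HasDerivAt F f' ((starRingEnd ℂ) z)) :
    HasDerivAt (fun s => (starRingEnd ℂ) (F ((starRingEnd ℂ) s))) ((starRingEnd ℂ) f') z := by
  rw [hasDerivAt_iff_isLittleO] at h ⊢
  have hcont : Tendsto (fun s : ℂ => (starRingEnd ℂ) s) (𝓝 z) (𝓝 ((starRingEnd ℂ) z)) :=
    (continuous_conj.tendsto z)
  have h2 := h.comp_tendsto hcont
  rw [← isLittleO_norm_norm] at h2 ⊢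
  refine h2.congr (fun s => ?_) (fun s => ?_)
  · simp only [Function.comp]
    conv_rhs => rw [← RCLike.norm_conj]
    congr 1
    simp [smul_eq_mul, map_sub, map_mul]
  · simp only [Function.comp]
    rw [← map_sub, RCLike.norm_conj]

lemma differentiable_conj_conj {F : ℂ → ℂ} (hF : Differentiable ℂ F) :
    Differentiable ℂ (fun s => (starRingEnd ℂ) (F ((starRingEnd ℂ) s))) := fun z =>
  (hasDerivAt_conj_conj (hF ((starRingEnd ℂ) z)).hasDerivAt).differentiableAt

lemma conjChar_apply {q : ℕ} (χ : DirichletCharacter ℂ q) (a : ZMod q) :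
    conjChar χ a = (starRingEnd ℂ) (χ a) := rfl

lemma conjChar_conjChar {q : ℕ} (χ : DirichletCharacter ℂ q) : conjChar (conjChar χ) = χ :=
  MulChar.ext' fun a => by simp [conjChar_apply]

lemma conjChar_one {q : ℕ} : conjChar (1 : DirichletCharacter ℂ q) = 1 :=
  MulChar.ext fun u => by simp [conjChar_apply, MulChar.one_apply_coe]

lemma conjChar_ne_one {q : ℕ} {χ : DirichletCharacter ℂ q} (hχ : χ ≠ 1) : conjChar χ ≠ 1 := by
  intro h
  apply hχ
  rw [← conjChar_conjChar χ, h, conjChar_one]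

lemma LFunction_conjChar {N : ℕ} [NeZero N] {χ : DirichletCharacter ℂ N} (hχ : χ ≠ 1) (s : ℂ) :
    LFunction (conjChar χ) s = (starRingEnd ℂ) (LFunction χ ((starRingEnd ℂ) s)) := by
  have hψ : conjChar χ ≠ 1 := conjChar_ne_one hχ
  have hF : Differentiable ℂ (LFunction (conjChar χ)) := differentiable_LFunction hψ
  have hG : Differentiable ℂ
      (fun s => (starRingEnd ℂ) (LFunction χ ((starRingEnd ℂ) s))) :=
    differentiable_conj_conj (differentiable_LFunction hχ)
  have hV : {z : ℂ | 1 < re z} ∈ 𝓝 (2 : ℂ) :=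
    (continuous_re.isOpen_preimage _ isOpen_Ioi).mem_nhds (by simp)
  have hFG : (LFunction (conjChar χ)) =ᶠ[𝓝 (2:ℂ)]
      (fun s => (starRingEnd ℂ) (LFunction χ ((starRingEnd ℂ) s))) := by
    filter_upwards [hV] with z hz
    have hz' : 1 < re ((starRingEnd ℂ) z) := by simpa using hz
    rw [LFunction_eq_LSeries _ hz, LFunction_eq_LSeries _ hz', LSeries, LSeries,
      starRingEnd_apply, tsum_star]
    congr 1 with n
    rcases eq_or_ne n 0 with rfl | hn
    · simp [LSeries.term]
    · rw [LSeries.term_of_ne_zero hn, LSeries.term_of_ne_zero hn]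
      have harg : ((n : ℂ)).arg ≠ Real.pi := by
        rw [Complex.natCast_arg]
        exact Real.pi_ne_zero.symm
      have key : ((n : ℂ)) ^ ((starRingEnd ℂ) z) = (starRingEnd ℂ) ((n:ℂ) ^ z) := by
        rw [Complex.cpow_conj _ _ harg]
        simp only [map_natCast]
      rw [← starRingEnd_apply, conjChar_apply, map_div₀, key, Complex.conj_conj]
  exact ((hF.differentiableOn.analyticOnNhd isOpen_univ).eqOn_of_preconnected_of_eventuallyEq
    (hG.differentiableOn.analyticOnNhd isOpen_univ) isPreconnected_univ (Set.mem_univ 2) hFG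
    (Set.mem_univ s))

section vals
variable {χ₅ : DirichletCharacter ℂ 5} (hχ : χ₅ (2 : ZMod 5) = I)
include hχ

lemma chi_three : χ₅ (3 : ZMod 5) = -I := by
  have h : (3 : ZMod 5) = 2 * 2 * 2 := by decide
  rw [h, map_mul, map_mul, hχ]
  simp [Complex.I_mul_I]

lemma chi_four : χ₅ (4 : ZMod 5) = -1 := by
  have h : (4 : ZMod 5) = 2 * 2 := by decide
  rw [h, map_mul, hχ, Complex.I_mul_I]

lemma chi_ne_one : χ₅ ≠ 1 := by
  intro h
  rw [h] at hχ
  rw [MulChar.one_apply (by decide : IsUnit (2 : ZMod 5))] at hχ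
  norm_num [Complex.ext_iff] at hχ

lemma chi_odd : χ₅.Odd := by
  have h : (-1 : ZMod 5) = 4 := by decide
  unfold DirichletCharacter.Odd
  rw [h, chi_four hχ]

lemma chi_inv : χ₅⁻¹ = conjChar χ₅ := by
  refine MulChar.ext' fun a => ?_
  rw [MulChar.inv_apply_eq_inv', conjChar_apply]
  have h5 : ∀ b : ZMod 5, b = 0 ∨ b = 1 ∨ b = 2 ∨ b = 3 ∨ b = 4 := by decide
  rcases h5 a with rfl | rfl | rfl | rfl | rfl
  · rw [MulChar.map_nonunit _ (by decide)]; simp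
  · rw [map_one]; simp
  · rw [hχ]; simp
  · rw [chi_three hχ, inv_neg, Complex.inv_I, neg_neg]; simp
  · rw [chi_four hχ]; norm_num

end vals

lemma chi_primitive {χ₅ : DirichletCharacter ℂ 5} (hne : χ₅ ≠ 1) : IsPrimitive χ₅ := by
  rw [isPrimitive_def]
  have hdvd : conductor χ₅ ∣ 5 := conductor_dvd_level χ₅
  rcases (Nat.prime_five.eq_one_or_self_of_dvd _ hdvd) with h | h
  · exact absurd (eq_one_iff_conductor_eq_one.mpr h) hne
  · exact h

lemma cos_two_pi_div_five : Real.cos (2 * π / 5) = (Real.sqrt 5 - 1) / 4 := by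
  have h : (2 * π / 5 : ℝ) = 2 * (π / 5) := by ring
  rw [h, Real.cos_two_mul, Real.cos_pi_div_five]
  have h5 : Real.sqrt 5 ^ 2 = 5 := Real.sq_sqrt (by norm_num)
  nlinarith [h5]

lemma sin_two_pi_div_five_sq : Real.sin (2 * π / 5) ^ 2 = (10 + 2 * Real.sqrt 5) / 16 := by
  have h := Real.sin_sq_add_cos_sq (2 * π / 5)
  rw [cos_two_pi_div_five] at h
  have h5 : Real.sqrt 5 ^ 2 = 5 := Real.sq_sqrt (by norm_num)
  nlinarith [h5]

lemma sin_pi_div_five_sq : Real.sin (π / 5) ^ 2 = (10 - 2 * Real.sqrt 5) / 16 := by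
  have h := Real.sin_sq_add_cos_sq (π / 5)
  rw [Real.cos_pi_div_five] at h
  have h5 : Real.sqrt 5 ^ 2 = 5 := Real.sq_sqrt (by norm_num)
  nlinarith [h5]

lemma theta_trig {θ : ℝ} (hθ : θ ∈ Set.Ioo 0 (Real.pi / 2))
    (htan : Real.tan θ ^ 2 =
      (Real.sqrt 2 - Real.sqrt (1 + 1 / Real.sqrt 5)) /
        (Real.sqrt 2 + Real.sqrt (1 + 1 / Real.sqrt 5))) :
    Real.cos (2 * θ) = 2 * Real.sin (2 * π / 5) / Real.sqrt 5 ∧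
    Real.sin (2 * θ) = 2 * Real.sin (π / 5) / Real.sqrt 5 := by
  obtain ⟨hθ0, hθ1⟩ := hθ
  have hπ := Real.pi_pos
  have h5 : Real.sqrt 5 ^ 2 = 5 := Real.sq_sqrt (by norm_num)
  have h5pos : 0 < Real.sqrt 5 := Real.sqrt_pos.mpr (by norm_num)
  have h5gt1 : 1 < Real.sqrt 5 := by nlinarith
  obtain ⟨A, hA⟩ : ∃ a : ℝ, a = 1 + 1 / Real.sqrt 5 := ⟨_, rfl⟩
  rw [← hA] at htan
  have hApos : 0 < A := by rw [hA]; positivity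
  have hAlt2 : A < 2 := by
    rw [hA]
    have : 1 / Real.sqrt 5 < 1 := by
      rw [div_lt_one h5pos]; exact h5gt1
    linarith
  have hsA : Real.sqrt A ^ 2 = A := Real.sq_sqrt hApos.le
  have hs2 : Real.sqrt 2 ^ 2 = 2 := Real.sq_sqrt (by norm_num)
  have hsApos : 0 < Real.sqrt A := Real.sqrt_pos.mpr hApos
  have hs2pos : 0 < Real.sqrt 2 := Real.sqrt_pos.mpr (by norm_num)
  have hAltsqrt : Real.sqrt A < Real.sqrt 2 := by
    apply Real.sqrt_lt_sqrt hApos.le hAlt2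
  have hcosθ : 0 < Real.cos θ := Real.cos_pos_of_mem_Ioo ⟨by linarith, hθ1⟩
  have hsinθ : 0 < Real.sin θ := Real.sin_pos_of_pos_of_lt_pi hθ0 (by linarith)
  have hcsq : Real.cos θ ^ 2 = (1 + Real.tan θ ^ 2)⁻¹ :=
    (Real.inv_one_add_tan_sq hcosθ.ne').symm
  have htpos : 0 ≤ Real.tan θ ^ 2 := sq_nonneg _
  have hc2 : Real.cos (2 * θ) = (1 - Real.tan θ ^ 2) / (1 + Real.tan θ ^ 2) := by
    rw [Real.cos_two_mul, hcsq]
    field_simp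
    ring
  have hd : Real.sqrt 2 + Real.sqrt A ≠ 0 := by positivity
  have hfrac : 0 ≤ (Real.sqrt 2 - Real.sqrt A) / (Real.sqrt 2 + Real.sqrt A) :=
    div_nonneg (by linarith) (by positivity)
  have h1t : 0 < 1 + (Real.sqrt 2 - Real.sqrt A) / (Real.sqrt 2 + Real.sqrt A) := by linarith
  have hc2' : Real.cos (2 * θ) = Real.sqrt A / Real.sqrt 2 := by
    rw [hc2, htan]
    rw [div_eq_div_iff h1t.ne' hs2pos.ne']
    field_simp
    ring
  have hsin2pi5 : 0 ≤ Real.sin (2 * π / 5) :=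
    Real.sin_nonneg_of_nonneg_of_le_pi (by linarith) (by linarith)
  have hsinpi5 : 0 ≤ Real.sin (π / 5) :=
    Real.sin_nonneg_of_nonneg_of_le_pi (by linarith) (by linarith)
  have hAval : A * 10 = 10 + 2 * Real.sqrt 5 := by
    rw [hA]
    field_simp
    nlinarith [h5]
  have expand2 : (2 * Real.sin (2 * π / 5) / Real.sqrt 5) ^ 2
      = 4 * ((10 + 2 * Real.sqrt 5) / 16) / 5 := by
    rw [div_pow, mul_pow, sin_two_pi_div_five_sq, h5]
    norm_num
  have expand1 : (2 * Real.sin (π / 5) / Real.sqrt 5) ^ 2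
      = 4 * ((10 - 2 * Real.sqrt 5) / 16) / 5 := by
    rw [div_pow, mul_pow, sin_pi_div_five_sq, h5]
    norm_num
  have hcgoal : Real.cos (2 * θ) = 2 * Real.sin (2 * π / 5) / Real.sqrt 5 := by
    rw [hc2']
    have h1 : (Real.sqrt A / Real.sqrt 2) ^ 2 = (2 * Real.sin (2 * π / 5) / Real.sqrt 5) ^ 2 := by
      rw [div_pow, hsA, hs2, expand2]
      linarith [hAval]
    have h2 : (0:ℝ) ≤ Real.sqrt A / Real.sqrt 2 := by positivity
    have h3 : (0:ℝ) ≤ 2 * Real.sin (2 * π / 5) / Real.sqrt 5 := by positivity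
    calc Real.sqrt A / Real.sqrt 2 = Real.sqrt ((Real.sqrt A / Real.sqrt 2) ^ 2) :=
          (Real.sqrt_sq h2).symm
      _ = Real.sqrt ((2 * Real.sin (2 * π / 5) / Real.sqrt 5) ^ 2) := by rw [h1]
      _ = 2 * Real.sin (2 * π / 5) / Real.sqrt 5 := Real.sqrt_sq h3
  refine ⟨hcgoal, ?_⟩
  have hsin2θ : 0 ≤ Real.sin (2 * θ) :=
    Real.sin_nonneg_of_nonneg_of_le_pi (by linarith) (by linarith)
  have hsq : Real.sin (2 * θ) ^ 2 = (2 * Real.sin (π / 5) / Real.sqrt 5) ^ 2 := by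
    have hpyth := Real.sin_sq_add_cos_sq (2 * θ)
    rw [hcgoal, expand2] at hpyth
    rw [expand1]
    linarith
  have h3 : (0:ℝ) ≤ 2 * Real.sin (π / 5) / Real.sqrt 5 := by positivity
  calc Real.sin (2 * θ) = Real.sqrt (Real.sin (2 * θ) ^ 2) := (Real.sqrt_sq hsin2θ).symm
    _ = Real.sqrt ((2 * Real.sin (π / 5) / Real.sqrt 5) ^ 2) := by rw [hsq]
    _ = 2 * Real.sin (π / 5) / Real.sqrt 5 := Real.sqrt_sq h3

section gauss
variable {χ₅ : DirichletCharacter ℂ 5} (hχ₁ : χ₅ (1 : ZMod 5) = 1) (hχ₂ : χ₅ (2 : ZMod 5) = I)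
  (hχ₃ : χ₅ (3 : ZMod 5) = -I) (hχ₄ : χ₅ (4 : ZMod 5) = -1)

lemma exp_zmod (k : ℤ) : ZMod.stdAddChar ((k : ZMod 5)) =
    (Real.cos (2 * π * k / 5) : ℝ) + (Real.sin (2 * π * k / 5) : ℝ) * I := by
  rw [ZMod.stdAddChar_coe]
  have h : (2 * (π : ℂ) * I * k / ((5:ℕ):ℂ)) = ((2 * π * k / 5 : ℝ) : ℂ) * I := by
    push_cast; ring
  rw [h, Complex.exp_mul_I, ← Complex.ofReal_cos, ← Complex.ofReal_sin]

include hχ₁ hχ₂ hχ₃ hχ₄ in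
lemma gauss_eval : gaussSum χ₅ ZMod.stdAddChar =
    -(2 * Real.sin (π/5) : ℝ) + (2 * Real.sin (2*π/5) : ℝ) * I := by
  rw [gaussSum]
  have huniv : (Finset.univ : Finset (ZMod 5)) = {0, 1, 2, 3, 4} := by decide
  rw [huniv, Finset.sum_insert (by decide), Finset.sum_insert (by decide),
    Finset.sum_insert (by decide), Finset.sum_insert (by decide), Finset.sum_singleton]
  have e0 : χ₅ (0 : ZMod 5) = 0 := by
    exact MulChar.map_nonunit _ (by decide)
  have k1 : (1 : ZMod 5) = ((1 : ℤ) : ZMod 5) := by decide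
  have k2 : (2 : ZMod 5) = ((2 : ℤ) : ZMod 5) := by decide
  have k3 : (3 : ZMod 5) = ((3 : ℤ) : ZMod 5) := by decide
  have k4 : (4 : ZMod 5) = ((4 : ℤ) : ZMod 5) := by decide
  rw [e0, zero_mul, zero_add, hχ₁, hχ₂, hχ₃, hχ₄, k1, k2, k3, k4,
    exp_zmod 1, exp_zmod 2, exp_zmod 3, exp_zmod 4]
  have r1 : (2 * π * (1:ℤ) / 5 : ℝ) = 2*π/5 := by push_cast; ring
  have r2 : (2 * π * (2:ℤ) / 5 : ℝ) = π - π/5 := by push_cast; ring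
  have r3 : (2 * π * (3:ℤ) / 5 : ℝ) = π - (-(π/5)) := by push_cast; ring
  have r4 : (2 * π * (4:ℤ) / 5 : ℝ) = -(2*π/5) + 2*π := by push_cast; ring
  rw [r1, r2, r3, r4, Real.cos_pi_sub, Real.sin_pi_sub, Real.cos_pi_sub, Real.sin_pi_sub,
    Real.cos_add_two_pi, Real.sin_add_two_pi, Real.cos_neg, Real.sin_neg, Real.cos_neg,
    Real.sin_neg]
  push_cast
  linear_combination (2 * Complex.sin ((π:ℂ)/5)) * Complex.I_sq

include hχ₁ hχ₂ hχ₃ hχ₄ in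
lemma gauss_eval' : gaussSum (conjChar χ₅) ZMod.stdAddChar =
    (2 * Real.sin (π/5) : ℝ) + (2 * Real.sin (2*π/5) : ℝ) * I := by
  rw [gaussSum]
  have huniv : (Finset.univ : Finset (ZMod 5)) = {0, 1, 2, 3, 4} := by decide
  rw [huniv, Finset.sum_insert (by decide), Finset.sum_insert (by decide),
    Finset.sum_insert (by decide), Finset.sum_insert (by decide), Finset.sum_singleton]
  have e0 : conjChar χ₅ (0 : ZMod 5) = 0 := MulChar.map_nonunit _ (by decide)
  have k1 : (1 : ZMod 5) = ((1 : ℤ) : ZMod 5) := by decide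
  have k2 : (2 : ZMod 5) = ((2 : ℤ) : ZMod 5) := by decide
  have k3 : (3 : ZMod 5) = ((3 : ℤ) : ZMod 5) := by decide
  have k4 : (4 : ZMod 5) = ((4 : ℤ) : ZMod 5) := by decide
  have hψ₁ : conjChar χ₅ (1 : ZMod 5) = 1 := by rw [conjChar_apply, hχ₁, map_one]
  have hψ₂ : conjChar χ₅ (2 : ZMod 5) = -I := by rw [conjChar_apply, hχ₂, Complex.conj_I]
  have hψ₃ : conjChar χ₅ (3 : ZMod 5) = I := by
    rw [conjChar_apply, hχ₃, map_neg, Complex.conj_I, neg_neg]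
  have hψ₄ : conjChar χ₅ (4 : ZMod 5) = -1 := by
    rw [conjChar_apply, hχ₄]; simp
  rw [e0, zero_mul, zero_add, hψ₁, hψ₂, hψ₃, hψ₄, k1, k2, k3, k4,
    exp_zmod 1, exp_zmod 2, exp_zmod 3, exp_zmod 4]
  have r1 : (2 * π * (1:ℤ) / 5 : ℝ) = 2*π/5 := by push_cast; ring
  have r2 : (2 * π * (2:ℤ) / 5 : ℝ) = π - π/5 := by push_cast; ring
  have r3 : (2 * π * (3:ℤ) / 5 : ℝ) = π - (-(π/5)) := by push_cast; ring
  have r4 : (2 * π * (4:ℤ) / 5 : ℝ) = -(2*π/5) + 2*π := by push_cast; ring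
  rw [r1, r2, r3, r4, Real.cos_pi_sub, Real.sin_pi_sub, Real.cos_pi_sub, Real.sin_pi_sub,
    Real.cos_add_two_pi, Real.sin_add_two_pi, Real.cos_neg, Real.sin_neg, Real.cos_neg,
    Real.sin_neg]
  push_cast
  linear_combination (-2 * Complex.sin ((π:ℂ)/5)) * Complex.I_sq

lemma five_half : ((5:ℕ):ℂ) ^ ((1:ℂ)/2) = (Real.sqrt 5 : ℂ) := by
  have h : ((5:ℕ):ℂ) = ((5:ℝ):ℂ) := by norm_num
  have h2 : ((1:ℂ)/2) = (((1:ℝ)/2 : ℝ) : ℂ) := by norm_num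
  rw [h, h2, ← Complex.ofReal_cpow (by norm_num : (0:ℝ) ≤ 5)]
  rw [Real.sqrt_eq_rpow]

include hχ₁ hχ₂ hχ₃ hχ₄ in
lemma root_chi {c s : ℝ} (hOdd : χ₅.Odd)
    (hc : c * Real.sqrt 5 = 2 * Real.sin (2*π/5)) (hs : s * Real.sqrt 5 = 2 * Real.sin (π/5)) :
    rootNumber χ₅ = (c : ℂ) + (s : ℂ) * I := by
  rw [rootNumber, if_neg hOdd.not_even, pow_one, five_half]
  have h5ne : (Real.sqrt 5 : ℂ) ≠ 0 := by
    simp only [ne_eq, Complex.ofReal_eq_zero]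
    positivity
  rw [div_div, div_eq_iff (by simp [Complex.I_ne_zero, h5ne])]
  rw [gauss_eval hχ₁ hχ₂ hχ₃ hχ₄]
  have hc' : (c : ℂ) * (Real.sqrt 5 : ℂ) = 2 * ((Real.sin (2*π/5) : ℝ) : ℂ) := by
    exact_mod_cast hc
  have hs' : (s : ℂ) * (Real.sqrt 5 : ℂ) = 2 * ((Real.sin (π/5) : ℝ) : ℂ) := by
    exact_mod_cast hs
  push_cast at hc' hs' ⊢
  linear_combination (-Complex.I) * hc' + (-(Complex.I^2)) * hs' +
    (-2 * Complex.sin ((π:ℂ)/5)) * Complex.I_sq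

include hχ₁ hχ₂ hχ₃ hχ₄ in
lemma root_psi {c s : ℝ} (hOdd : (conjChar χ₅).Odd)
    (hc : c * Real.sqrt 5 = 2 * Real.sin (2*π/5)) (hs : s * Real.sqrt 5 = 2 * Real.sin (π/5)) :
    rootNumber (conjChar χ₅) = (c : ℂ) - (s : ℂ) * I := by
  rw [rootNumber, if_neg hOdd.not_even, pow_one, five_half]
  have h5ne : (Real.sqrt 5 : ℂ) ≠ 0 := by
    simp only [ne_eq, Complex.ofReal_eq_zero]
    positivity
  rw [div_div, div_eq_iff (by simp [Complex.I_ne_zero, h5ne])]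
  rw [gauss_eval' hχ₁ hχ₂ hχ₃ hχ₄]
  have hc' : (c : ℂ) * (Real.sqrt 5 : ℂ) = 2 * ((Real.sin (2*π/5) : ℝ) : ℂ) := by
    exact_mod_cast hc
  have hs' : (s : ℂ) * (Real.sqrt 5 : ℂ) = 2 * ((Real.sin (π/5) : ℝ) : ℂ) := by
    exact_mod_cast hs
  push_cast at hc' hs' ⊢
  linear_combination (-Complex.I) * hc' + (Complex.I^2) * hs' +
    (2 * Complex.sin ((π:ℂ)/5)) * Complex.I_sq

end gauss
end aux

/-- Non-real zeros of the Davenport–Heilbronn function occur in quadruples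
symmetric with respect to the real axis and the critical line `Re s = 1/2`. -/
theorem davenport_heilbronn_zero_quadruples
    (χ₅ : DirichletCharacter ℂ 5) (hχ : χ₅ (2 : ZMod 5) = I)
    (θ : ℝ) (hθ : θ ∈ Set.Ioo 0 (Real.pi / 2))
    (htan : Real.tan θ ^ 2 =
      (Real.sqrt 2 - Real.sqrt (1 + 1 / Real.sqrt 5)) /
        (Real.sqrt 2 + Real.sqrt (1 + 1 / Real.sqrt 5)))
    (f : ℂ → ℂ)
    (hf : ∀ s : ℂ, f s = (1 / 2) * ((Real.cos θ : ℂ))⁻¹ *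
      (Complex.exp (-(I * θ)) * LFunction χ₅ s +
        Complex.exp (I * θ) * LFunction (conjChar χ₅) s))
    (σ₀ t₀ : ℝ) (ht₀ : t₀ ≠ 0) (h₀ : f ((σ₀ : ℂ) + (t₀ : ℂ) * I) = 0) :
    f ((σ₀ : ℂ) - (t₀ : ℂ) * I) = 0 ∧
      f (1 - (σ₀ : ℂ) + (t₀ : ℂ) * I) = 0 ∧
      f (1 - (σ₀ : ℂ) - (t₀ : ℂ) * I) = 0 := by
  have hχ₁ : χ₅ (1 : ZMod 5) = 1 := map_one χ₅
  have hχ₃ : χ₅ (3 : ZMod 5) = -I := chi_three hχ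
  have hχ₄ : χ₅ (4 : ZMod 5) = -1 := chi_four hχ
  have hne : χ₅ ≠ 1 := chi_ne_one hχ
  have hψne : conjChar χ₅ ≠ 1 := conjChar_ne_one hne
  have hodd : χ₅.Odd := chi_odd hχ
  have hψodd : (conjChar χ₅).Odd := by
    unfold DirichletCharacter.Odd
    rw [conjChar_apply, hodd]
    simp
  have hprim : IsPrimitive χ₅ := chi_primitive hne
  have hψprim : IsPrimitive (conjChar χ₅) := chi_primitive hψne
  have hinv : χ₅⁻¹ = conjChar χ₅ := chi_inv hχ
  have hinv2 : (conjChar χ₅)⁻¹ = χ₅ := by rw [← hinv, inv_inv]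
  -- trig data
  obtain ⟨hcos2, hsin2⟩ := theta_trig hθ htan
  have h5pos : (0:ℝ) < Real.sqrt 5 := Real.sqrt_pos.mpr (by norm_num)
  have hc : Real.cos (2*θ) * Real.sqrt 5 = 2 * Real.sin (2*Real.pi/5) := by
    rw [hcos2]; field_simp
  have hs : Real.sin (2*θ) * Real.sqrt 5 = 2 * Real.sin (Real.pi/5) := by
    rw [hsin2]; field_simp
  have hWχ : rootNumber χ₅ = (Real.cos (2*θ) : ℂ) + (Real.sin (2*θ) : ℂ) * I :=
    root_chi hχ₁ hχ hχ₃ hχ₄ hodd hc hs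
  have hWψ : rootNumber (conjChar χ₅) = (Real.cos (2*θ) : ℂ) - (Real.sin (2*θ) : ℂ) * I :=
    root_psi hχ₁ hχ hχ₃ hχ₄ hψodd hc hs
  -- exponential identities
  have hE1 : Complex.exp (-(I * θ)) * ((Real.cos (2*θ) : ℂ) + (Real.sin (2*θ) : ℂ) * I)
      = Complex.exp (I * θ) := by
    have h2 : ((Real.cos (2*θ) : ℂ) + (Real.sin (2*θ) : ℂ) * I)
        = Complex.exp (((2*θ : ℝ) : ℂ) * I) := by
      rw [Complex.exp_mul_I, ← Complex.ofReal_cos, ← Complex.ofReal_sin]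
    rw [h2, ← Complex.exp_add]
    congr 1
    push_cast
    ring
  have hE2 : Complex.exp (I * θ) * ((Real.cos (2*θ) : ℂ) - (Real.sin (2*θ) : ℂ) * I)
      = Complex.exp (-(I * θ)) := by
    have h2 : ((Real.cos (2*θ) : ℂ) - (Real.sin (2*θ) : ℂ) * I)
        = Complex.exp (((-(2*θ) : ℝ) : ℂ) * I) := by
      rw [Complex.exp_mul_I, ← Complex.ofReal_cos, ← Complex.ofReal_sin, Real.cos_neg,
        Real.sin_neg]
      push_cast
      ring
    rw [h2, ← Complex.exp_add]
    congr 1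
    push_cast
    ring
  -- nonvanishing of prefactor
  have hcosθpos : 0 < Real.cos θ :=
    Real.cos_pos_of_mem_Ioo ⟨by linarith [hθ.1, Real.pi_pos], hθ.2⟩
  have hpre : ((1:ℂ)/2) * ((Real.cos θ : ℂ))⁻¹ ≠ 0 := by
    apply mul_ne_zero (by norm_num)
    apply inv_ne_zero
    simp only [ne_eq, Complex.ofReal_eq_zero]
    exact hcosθpos.ne'
  -- conjugation symmetry
  have hfconj : ∀ s : ℂ, f ((starRingEnd ℂ) s) = (starRingEnd ℂ) (f s) := by
    intro s
    rw [hf, hf]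
    have hL1 : LFunction (conjChar χ₅) ((starRingEnd ℂ) s)
        = (starRingEnd ℂ) (LFunction χ₅ s) := by
      rw [LFunction_conjChar hne ((starRingEnd ℂ) s), Complex.conj_conj]
    have hL2 : LFunction χ₅ ((starRingEnd ℂ) s)
        = (starRingEnd ℂ) (LFunction (conjChar χ₅) s) := by
      conv_lhs => rw [← conjChar_conjChar χ₅]
      rw [LFunction_conjChar hψne ((starRingEnd ℂ) s), Complex.conj_conj]
    rw [hL1, hL2]
    rw [map_mul, map_mul, map_add, map_mul, map_mul]
    rw [← Complex.exp_conj, ← Complex.exp_conj]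
    have e1 : (starRingEnd ℂ) (-(I * θ)) = I * θ := by
      simp [Complex.conj_I, Complex.conj_ofReal]
    have e2 : (starRingEnd ℂ) (I * θ) = -(I * θ) := by
      simp [Complex.conj_I, Complex.conj_ofReal]
    rw [e1, e2]
    have e3 : (starRingEnd ℂ) ((1:ℂ)/2) = (1:ℂ)/2 := by rw [map_div₀, map_one, map_ofNat]
    have e4 : (starRingEnd ℂ) (((Real.cos θ : ℂ))⁻¹) = ((Real.cos θ : ℂ))⁻¹ := by
      rw [map_inv₀, Complex.conj_ofReal]
    rw [e3, e4]
    ring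
  -- zero propagation through the functional equation
  have key : ∀ s : ℂ, s.im ≠ 0 → f s = 0 → f (1 - s) = 0 := by
    intro s him hzero
    have hγs : Gammaℝ (s+1) ≠ 0 := by
      rw [Ne, Complex.Gammaℝ_eq_zero_iff]
      rintro ⟨n, hn⟩
      apply him
      have := congrArg Complex.im hn
      simpa using this
    have hγ1s : Gammaℝ ((1-s)+1) ≠ 0 := by
      rw [Ne, Complex.Gammaℝ_eq_zero_iff]
      rintro ⟨n, hn⟩
      apply him
      have := congrArg Complex.im hn
      simpa using this
    -- L = Λ / γ
    have hLχ1s : LFunction χ₅ (1-s) = completedLFunction χ₅ (1-s) / Gammaℝ ((1-s)+1) := by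
      rw [LFunction_eq_completed_div_gammaFactor χ₅ (1-s) (Or.inr (by norm_num)),
        hodd.gammaFactor_def]
    have hLψ1s : LFunction (conjChar χ₅) (1-s)
        = completedLFunction (conjChar χ₅) (1-s) / Gammaℝ ((1-s)+1) := by
      rw [LFunction_eq_completed_div_gammaFactor _ (1-s) (Or.inr (by norm_num)),
        hψodd.gammaFactor_def]
    have hΛχ : completedLFunction χ₅ s = Gammaℝ (s+1) * LFunction χ₅ s := by
      have h := LFunction_eq_completed_div_gammaFactor χ₅ s (Or.inr (by norm_num))
      rw [hodd.gammaFactor_def] at h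
      rw [h]
      field_simp
    have hΛψ : completedLFunction (conjChar χ₅) s
        = Gammaℝ (s+1) * LFunction (conjChar χ₅) s := by
      have h := LFunction_eq_completed_div_gammaFactor (conjChar χ₅) s (Or.inr (by norm_num))
      rw [hψodd.gammaFactor_def] at h
      rw [h]
      field_simp
    have hFEχ := hprim.completedLFunction_one_sub s
    have hFEψ := hψprim.completedLFunction_one_sub s
    rw [hinv] at hFEχ
    rw [hinv2] at hFEψ
    -- extract the vanishing combination
    rw [hf] at hzero
    have hz : Complex.exp (-(I * θ)) * LFunction χ₅ s
        + Complex.exp (I * θ) * LFunction (conjChar χ₅) s = 0 := by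
      rcases mul_eq_zero.mp hzero with h | h
      · exact absurd h hpre
      · exact h
    rw [hf]
    have hcombo : Complex.exp (-(I * θ)) * LFunction χ₅ (1-s)
        + Complex.exp (I * θ) * LFunction (conjChar χ₅) (1-s) = 0 := by
      rw [hLχ1s, hLψ1s, hFEχ, hFEψ, hΛχ, hΛψ, hWχ, hWψ]
      linear_combination
        (((5:ℕ):ℂ) ^ (s - 1/2) * Gammaℝ (s+1) * LFunction (conjChar χ₅) s
          / Gammaℝ ((1-s)+1)) * hE1 +
        (((5:ℕ):ℂ) ^ (s - 1/2) * Gammaℝ (s+1) * LFunction χ₅ s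
          / Gammaℝ ((1-s)+1)) * hE2 +
        (((5:ℕ):ℂ) ^ (s - 1/2) * Gammaℝ (s+1) / Gammaℝ ((1-s)+1)) * hz
    rw [hcombo, mul_zero]
  -- assemble the three conclusions
  obtain ⟨s₀, hs₀⟩ : ∃ s₀ : ℂ, s₀ = (σ₀ : ℂ) + (t₀ : ℂ) * I := ⟨_, rfl⟩
  have hconj : (starRingEnd ℂ) s₀ = (σ₀ : ℂ) - (t₀ : ℂ) * I := by
    rw [hs₀, map_add, map_mul, Complex.conj_ofReal, Complex.conj_ofReal, Complex.conj_I]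
    ring
  have him : s₀.im ≠ 0 := by
    rw [hs₀]
    simpa using ht₀
  have himc : ((starRingEnd ℂ) s₀).im ≠ 0 := by
    rw [hconj]
    simp only [Complex.sub_im, Complex.ofReal_im, Complex.mul_im, Complex.ofReal_re,
      Complex.I_im, Complex.I_re, mul_zero, mul_one, zero_sub, zero_mul, add_zero]
    simpa using ht₀
  rw [← hs₀] at h₀
  have part1 : f ((σ₀ : ℂ) - (t₀ : ℂ) * I) = 0 := by
    rw [← hconj, hfconj s₀, h₀, map_zero]
  have part3 : f (1 - (σ₀ : ℂ) - (t₀ : ℂ) * I) = 0 := by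
    have h := key s₀ him h₀
    have : (1:ℂ) - (σ₀ : ℂ) - (t₀ : ℂ) * I = 1 - s₀ := by rw [hs₀]; ring
    rw [this]
    exact h
  have part2 : f (1 - (σ₀ : ℂ) + (t₀ : ℂ) * I) = 0 := by
    have h := key ((starRingEnd ℂ) s₀) himc (by rw [hfconj s₀, h₀, map_zero])
    have : (1:ℂ) - (σ₀ : ℂ) + (t₀ : ℂ) * I = 1 - (starRingEnd ℂ) s₀ := by
      rw [hconj]; ring
    rw [this]
    exact h
  exact ⟨part1, part2, part3⟩
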